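/- Let Λ be an order in a semisimple Q_ℓ-algebra B, and let M ⊇ Λ be a maximal order containing Λ with Λ ≠ M. Then the F_ℓ-algebra Λ/ℓ contains a nonzero nilpotent two-sided ideal; in particular Λ/ℓ is not semisimple. -/

import Mathlib

set_option synthInstance.maxHeartbeats 400000
set_option maxHeartbeats 1000000

open scoped TensorProduct

lemma aux_tmul_natCast {n : ℕ} {S : Type} [Ring S] (m : ℕ) (x : S) :
    ((m : ZMod n) ⊗ₜ[ℤ] x : ZMod n ⊗[ℤ] S) = 1 ⊗ₜ[ℤ] (m • x) := by
  induction m with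
  | zero => simp
  | succ k ih =>
      rw [Nat.cast_succ, TensorProduct.add_tmul, ih, succ_nsmul, TensorProduct.tmul_add]

lemma aux_surj {n : ℕ} [NeZero n] {S : Type} [Ring S] (y : ZMod n ⊗[ℤ] S) :
    ∃ x : S, (1 : ZMod n) ⊗ₜ[ℤ] x = y := by
  induction y using TensorProduct.induction_on with
  | zero => exact ⟨0, by simpa using zero_mem Λ⟩
  | tmul c x =>
      exact ⟨c.val • x, by rw [← aux_tmul_natCast, ZMod.natCast_rightInverse c]⟩
  | add u v hu hv =>
      obtain ⟨a, ha⟩ := hu; obtain ⟨b, hb⟩ := hv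
      exact ⟨a + b, by rw [TensorProduct.tmul_add, ha, hb]⟩

lemma aux_tmul_nsmul_zero {n : ℕ} {S : Type} [Ring S] (y : S) :
    ((1 : ZMod n) ⊗ₜ[ℤ] (n • y) : ZMod n ⊗[ℤ] S) = 0 := by
  rw [← aux_tmul_natCast, ZMod.natCast_self, TensorProduct.zero_tmul]

lemma aux_ker {n : ℕ} {S : Type} [Ring S] (x : S)
    (h : ((1 : ZMod n) ⊗ₜ[ℤ] x : ZMod n ⊗[ℤ] S) = 0) :
    ∃ y : S, (n : ℤ) • y = x := by
  set I : Ideal ℤ := Ideal.span {(n : ℤ)} with hI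
  set e₁ : ZMod n ≃ₗ[ℤ] ℤ ⧸ I :=
    (Int.quotientSpanNatEquivZMod n).symm.toAddEquiv.toIntLinearEquiv with he₁
  have h1 : e₁ 1 = Ideal.Quotient.mk I 1 := by
    rw [he₁]
    show (Int.quotientSpanNatEquivZMod n).symm 1 = _
    rw [map_one]; rfl
  have hx : x ∈ I • (⊤ : Submodule ℤ S) := by
    have h2 : (TensorProduct.quotTensorEquivQuotSMul S I)
        ((TensorProduct.congr e₁ (LinearEquiv.refl ℤ S)) ((1 : ZMod n) ⊗ₜ[ℤ] x))
        = Submodule.Quotient.mk x := by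
      rw [TensorProduct.congr_tmul, h1]
      simpa using TensorProduct.quotTensorEquivQuotSMul_mk_tmul I 1 x
    rw [h, map_zero, map_zero, eq_comm, Submodule.Quotient.mk_eq_zero] at h2
    exact h2
  refine Submodule.smul_induction_on hx ?_ ?_
  · intro r hr s _
    rw [hI, Ideal.mem_span_singleton] at hr
    obtain ⟨c, rfl⟩ := hr
    exact ⟨c • s, by rw [← mul_smul, mul_comm]⟩
  · rintro a b ⟨y, rfl⟩ ⟨z, rfl⟩
    exact ⟨y + z, by rw [smul_add]⟩

/-- let `Λ` be an order in a semisimple `ℚ_ℓ`-algebra `B` and `M ⊇ Λ` a maximal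
order with `Λ ≠ M`. Then the `𝔽_ℓ`-algebra `Λ/ℓ ≅ ZMod ℓ ⊗ Λ` contains a nonzero nilpotent
two-sided ideal; in particular it is not semisimple. -/
theorem stmt9 (ℓ : ℕ) [Fact ℓ.Prime]
    (B : Type) [Ring B] [Algebra ℚ_[ℓ] B] [FiniteDimensional ℚ_[ℓ] B] [IsSemisimpleRing B]
    [Algebra ℤ_[ℓ] B] [IsScalarTower ℤ_[ℓ] ℚ_[ℓ] B]
    (Λ M : Subalgebra ℤ_[ℓ] B)
    [Module.Finite ℤ_[ℓ] Λ] [Module.Finite ℤ_[ℓ] M]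
    (hΛspan : Submodule.span ℚ_[ℓ] (Λ : Set B) = ⊤)
    (hMspan : Submodule.span ℚ_[ℓ] (M : Set B) = ⊤)
    (hΛM : Λ ≤ M) (hne : Λ ≠ M)
    (hmax : ∀ M' : Subalgebra ℤ_[ℓ] B, Module.Finite ℤ_[ℓ] M' →
      Submodule.span ℚ_[ℓ] (M' : Set B) = ⊤ → M ≤ M' → M' = M) :
    (∃ I : TwoSidedIdeal (ZMod ℓ ⊗[ℤ] Λ), I ≠ ⊥ ∧
      ∃ k : ℕ, ∀ l : List (ZMod ℓ ⊗[ℤ] Λ), l.length = k → (∀ x ∈ l, x ∈ I) → l.prod = 0) ∧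
    ¬ IsSemisimpleRing (ZMod ℓ ⊗[ℤ] Λ) := by
  classical
  have hp : ℓ.Prime := Fact.out
  have hℓ0 : (ℓ : ℚ_[ℓ]) ≠ 0 := Nat.cast_ne_zero.mpr hp.ne_zero
  -- cancellation of ℓ in B
  have hcanc : ∀ u v : B, ℓ • u = ℓ • v → u = v := by
    intro u v h
    rw [← Nat.cast_smul_eq_nsmul ℚ_[ℓ], ← Nat.cast_smul_eq_nsmul ℚ_[ℓ]] at h
    exact smul_right_injective B hℓ0 h
  -- Fact A : elements of the ℚ-span of Λ become elements of Λ after multiplying by a power of ℓ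
  have hA : ∀ b : B, b ∈ Submodule.span ℚ_[ℓ] (Λ : Set B) → ∃ k : ℕ, ℓ ^ k • b ∈ Λ := by
    intro b hb
    induction hb using Submodule.span_induction with
    | mem g hg => exact ⟨0, by simpa using hg⟩
    | zero => exact ⟨0, by simpa using zero_mem Λ⟩
    | add u v _ _ hu hv =>
        obtain ⟨k₁, h₁⟩ := hu; obtain ⟨k₂, h₂⟩ := hv
        refine ⟨k₁ + k₂, ?_⟩
        rw [smul_add]
        refine add_mem ?_ ?_
        · rw [add_comm k₁ k₂, pow_add, mul_smul]; exact nsmul_mem h₁ _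
        · rw [pow_add, mul_smul]; exact nsmul_mem h₂ _
    | smul q u _ hu =>
        obtain ⟨k, hk⟩ := hu
        -- find j with ‖ℓ^j * q‖ ≤ 1
        have hj : ∃ j : ℕ, ‖(ℓ : ℚ_[ℓ]) ^ j * q‖ ≤ 1 := by
          rcases eq_or_ne q 0 with rfl | hq
          · exact ⟨0, by simp⟩
          · have hlt : ((ℓ : ℝ)⁻¹) < 1 := by
              rw [inv_lt_one_iff₀]
              right
              exact_mod_cast hp.one_lt
            have hpos : (0 : ℝ) < ‖q‖⁻¹ := inv_pos.mpr (norm_pos_iff.mpr hq)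
            obtain ⟨j, hjlt⟩ := exists_pow_lt_of_lt_one hpos hlt
            refine ⟨j, ?_⟩
            rw [norm_mul, norm_pow, Padic.norm_p]
            have := mul_lt_mul_of_pos_right hjlt (norm_pos_iff.mpr hq)
            rw [inv_mul_cancel₀ (norm_ne_zero_iff.mpr hq)] at this
            exact le_of_lt this
        obtain ⟨j, hjle⟩ := hj
        refine ⟨j + k, ?_⟩
        set z : ℤ_[ℓ] := ⟨(ℓ : ℚ_[ℓ]) ^ j * q, hjle⟩ with hz
        have key : ℓ ^ (j + k) • (q • u) = z • (ℓ ^ k • u) := by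
          have h1 : z • (ℓ ^ k • u) = ((ℓ : ℚ_[ℓ]) ^ j * q) • (ℓ ^ k • u) := by
            rw [← algebraMap_smul ℚ_[ℓ] z (ℓ ^ k • u)]
            congr 1
          rw [h1, ← Nat.cast_smul_eq_nsmul ℚ_[ℓ] (ℓ ^ (j + k)),
            ← Nat.cast_smul_eq_nsmul ℚ_[ℓ] (ℓ ^ k), smul_smul, smul_smul]
          congr 1
          push_cast
          ring
        rw [key]
        exact Λ.smul_mem hk z
  -- Fact B : a uniform power a sends M into Λ
  have hfinM : Module.Finite ℤ_[ℓ] ↥(Subalgebra.toSubmodule M) :=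
    ‹Module.Finite ℤ_[ℓ] ↥M›
  have hMfg : (Subalgebra.toSubmodule M).FG := Module.Finite.iff_fg.mp hfinM
  obtain ⟨s, hs⟩ := hMfg
  have hgen : ∀ g : B, g ∈ s → ∃ k : ℕ, ℓ ^ k • g ∈ Λ := by
    intro g hg
    exact hA g (by rw [hΛspan]; trivial)
  choose f hf using hgen
  set a : ℕ := s.attach.sup (fun g => f g.1 g.2) with ha
  have hB : ∀ b ∈ M, ℓ ^ a • b ∈ Λ := by
    intro b hb
    have hb' : b ∈ Submodule.span ℤ_[ℓ] (s : Set B) := by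
      rw [hs]; exact hb
    clear hb
    induction hb' using Submodule.span_induction with
    | mem g hg =>
        have hle : f g hg ≤ a := by
          have := Finset.le_sup (f := fun g : {x // x ∈ s} => f g.1 g.2)
            (Finset.mem_attach s ⟨g, hg⟩)
          exact this
        have : ℓ ^ a • g = ℓ ^ (a - f g hg) • (ℓ ^ (f g hg) • g) := by
          rw [← mul_smul, ← pow_add, Nat.sub_add_cancel hle]
        rw [this]
        exact nsmul_mem (hf g hg) _
    | zero => rw [smul_zero]; exact zero_mem Λ
    | add u v _ _ hu hv => rw [smul_add]; exact add_mem hu hv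
    | smul z u _ hu =>
        rw [smul_comm]
        exact Λ.smul_mem hu z
  -- membership lemmas in plain form
  have hMmul : ∀ u v : B, u ∈ M → v ∈ M → u * v ∈ M := fun u v hu hv => mul_mem hu hv
  -- Fact C : a good element x₀
  have hC : ∃ x : ↥Λ, (∃ b ∈ M, (x : B) = ℓ • b) ∧ ¬ ∃ y : ↥Λ, (ℓ : ℤ) • y = x := by
    have hnotle : ¬ M ≤ Λ := fun h => hne (le_antisymm hΛM h)
    obtain ⟨b, hbM, hbΛ⟩ := SetLike.not_le_iff_exists.mp hnotle
    have hk : ∃ k : ℕ, ℓ ^ k • b ∈ Λ := hA b (by rw [hΛspan]; trivial)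
    set k := Nat.find hk with hkdef
    have hk0 : k ≠ 0 := by
      intro h0
      have := Nat.find_spec hk
      rw [← hkdef, h0] at this
      simp at this
      exact hbΛ this
    refine ⟨⟨ℓ ^ k • b, Nat.find_spec hk⟩, ⟨ℓ ^ (k - 1) • b, nsmul_mem hbM _, ?_⟩, ?_⟩
    · show ℓ ^ k • b = ℓ • ℓ ^ (k - 1) • b
      rw [← mul_smul, ← pow_succ', Nat.sub_add_cancel (Nat.one_le_iff_ne_zero.mpr hk0)]
    · rintro ⟨y, hy⟩
      have hyB : (ℓ : ℤ) • (y : B) = ℓ ^ k • b := congrArg Subtype.val hy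
      rw [natCast_zsmul] at hyB
      have hk1 : ℓ ^ k • b = ℓ • ℓ ^ (k - 1) • b := by
        rw [← mul_smul, ← pow_succ', Nat.sub_add_cancel (Nat.one_le_iff_ne_zero.mpr hk0)]
      rw [hk1] at hyB
      have : ℓ ^ (k - 1) • b = (y : B) := (hcanc _ _ hyB).symm
      have hmem : ℓ ^ (k - 1) • b ∈ Λ := this ▸ y.2
      exact Nat.find_min hk (Nat.pred_lt hk0) hmem
  obtain ⟨x₀, hx₀N, hx₀div⟩ := hC
  -- the map ψ
  set ψ : ↥Λ → ZMod ℓ ⊗[ℤ] ↥Λ := fun x => (1 : ZMod ℓ) ⊗ₜ[ℤ] x with hψ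
  -- the ideal
  set S : Set (ZMod ℓ ⊗[ℤ] ↥Λ) :=
    {t | ∃ x : ↥Λ, (∃ b ∈ M, (x : B) = ℓ • b) ∧ t = ψ x} with hS
  have Szero : (0 : ZMod ℓ ⊗[ℤ] ↥Λ) ∈ S :=
    ⟨0, ⟨0, zero_mem M, by simp⟩, by simp [hψ]⟩
  have Sadd : ∀ {u v : ZMod ℓ ⊗[ℤ] ↥Λ}, u ∈ S → v ∈ S → u + v ∈ S := by
    rintro u v ⟨x, ⟨b, hb, hxb⟩, rfl⟩ ⟨x', ⟨b', hb', hxb'⟩, rfl⟩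
    exact ⟨x + x', ⟨b + b', add_mem hb hb', by push_cast [hxb, hxb', smul_add]; ring⟩,
      by rw [hψ]; simp [TensorProduct.tmul_add]⟩
  have Sneg : ∀ {u : ZMod ℓ ⊗[ℤ] ↥Λ}, u ∈ S → -u ∈ S := by
    rintro u ⟨x, ⟨b, hb, hxb⟩, rfl⟩
    exact ⟨-x, ⟨-b, neg_mem hb, by push_cast [hxb, smul_neg]; ring⟩,
      by rw [hψ]; simp [TensorProduct.tmul_neg]⟩
  have Smull : ∀ {r u : ZMod ℓ ⊗[ℤ] ↥Λ}, u ∈ S → r * u ∈ S := by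
    rintro r u ⟨x, ⟨b, hb, hxb⟩, rfl⟩
    obtain ⟨z, hz⟩ := aux_surj r
    refine ⟨z * x, ⟨(z : B) * b, hMmul _ _ (hΛM z.2) hb, ?_⟩, ?_⟩
    · push_cast [hxb]; rw [mul_smul_comm]
    · rw [hψ, ← hz]
      simp [Algebra.TensorProduct.tmul_mul_tmul]
  have Smulr : ∀ {r u : ZMod ℓ ⊗[ℤ] ↥Λ}, u ∈ S → u * r ∈ S := by
    rintro r u ⟨x, ⟨b, hb, hxb⟩, rfl⟩
    obtain ⟨z, hz⟩ := aux_surj r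
    refine ⟨x * z, ⟨b * (z : B), hMmul _ _ hb (hΛM z.2), ?_⟩, ?_⟩
    · push_cast [hxb]; rw [smul_mul_assoc]
    · rw [hψ, ← hz]
      simp [Algebra.TensorProduct.tmul_mul_tmul]
  set I : TwoSidedIdeal (ZMod ℓ ⊗[ℤ] ↥Λ) :=
    TwoSidedIdeal.mk' S Szero Sadd Sneg Smull Smulr with hI
  have memI : ∀ t, t ∈ I ↔ t ∈ S := fun t => TwoSidedIdeal.mem_mk' S _ _ _ _ _ t
  -- ψ x₀ is a nonzero element of I
  have hψx₀I : ψ x₀ ∈ I := (memI _).mpr ⟨x₀, hx₀N, rfl⟩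
  have hψx₀ne : ψ x₀ ≠ 0 := by
    intro h
    obtain ⟨y, hy⟩ := aux_ker x₀ h
    exact hx₀div ⟨y, hy⟩
  have hIbot : I ≠ ⊥ := by
    intro h
    rw [h, TwoSidedIdeal.mem_bot] at hψx₀I
    exact hψx₀ne hψx₀I
  -- nilpotency: products of lists from N
  have hD : ∀ lx : List ↥Λ, (∀ x ∈ lx, ∃ b ∈ M, (x : B) = ℓ • b) →
      ∃ b ∈ M, ((lx.prod : ↥Λ) : B) = ℓ ^ lx.length • b := by
    intro lx
    induction lx with
    | nil => intro _; exact ⟨1, one_mem M, by simp⟩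
    | cons x t ih =>
        intro hmem
        obtain ⟨bx, hbx, hx⟩ := hmem x List.mem_cons_self
        obtain ⟨bt, hbt, ht⟩ := ih (fun y hy => hmem y (List.mem_cons_of_mem x hy))
        refine ⟨bx * bt, hMmul _ _ hbx hbt, ?_⟩
        push_cast [List.prod_cons, hx, ht]
        rw [smul_mul_assoc, mul_smul_comm, ← mul_smul, List.length_cons, ← pow_succ']
  have hnil : ∀ l : List (ZMod ℓ ⊗[ℤ] ↥Λ), l.length = a + 1 → (∀ x ∈ l, x ∈ I) →
      l.prod = 0 := by
    intro l hlen hmem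
    -- extract a list in Λ
    have hext : ∀ l' : List (ZMod ℓ ⊗[ℤ] ↥Λ), (∀ x ∈ l', x ∈ I) →
        ∃ lx : List ↥Λ, lx.length = l'.length ∧ (∀ x ∈ lx, ∃ b ∈ M, (x : B) = ℓ • b) ∧
          l'.prod = ψ lx.prod := by
      intro l'
      induction l' with
      | nil =>
          intro _
          refine ⟨[], rfl, by simp, ?_⟩
          rw [hψ]
          simp only [List.prod_nil]
          exact Algebra.TensorProduct.one_def
      | cons y t ih =>
          intro hm
          obtain ⟨x, hxN, hxy⟩ := (memI y).mp (hm y List.mem_cons_self)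
          obtain ⟨lx, hl1, hl2, hl3⟩ := ih (fun z hz => hm z (List.mem_cons_of_mem y hz))
          refine ⟨x :: lx, by simp [hl1], ?_, ?_⟩
          · intro w hw
            rcases List.mem_cons.mp hw with rfl | hw'
            · exact hxN
            · exact hl2 w hw'
          · rw [List.prod_cons, List.prod_cons, hxy, hl3, hψ]
            simp [Algebra.TensorProduct.tmul_mul_tmul]
    obtain ⟨lx, hl1, hl2, hl3⟩ := hext l hmem
    obtain ⟨b, hbM, hprod⟩ := hD lx hl2
    rw [hl1, hlen] at hprod
    have hb' : ℓ ^ a • b ∈ Λ := hB b hbM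
    have hdecomp : ((lx.prod : ↥Λ) : B) = ℓ • ((⟨ℓ ^ a • b, hb'⟩ : ↥Λ) : B) := by
      rw [hprod, pow_succ', mul_smul]
    have : lx.prod = ℓ • (⟨ℓ ^ a • b, hb'⟩ : ↥Λ) := Subtype.ext hdecomp
    rw [hl3, this, hψ]
    exact aux_tmul_nsmul_zero _
  refine ⟨⟨I, hIbot, a + 1, hnil⟩, ?_⟩
  -- semisimplicity
  intro hss
  set R := ZMod ℓ ⊗[ℤ] ↥Λ
  haveI : IsSemisimpleRing R := hss
  set J : Ideal R := TwoSidedIdeal.asIdeal (R := R) I with hJ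
  obtain ⟨J', hcompl⟩ := hss.toComplementedLattice.exists_isCompl J
  have hsup : J ⊔ J' = ⊤ := hcompl.sup_eq_top
  have h1 : (1 : R) ∈ J ⊔ J' := by rw [hsup]; trivial
  obtain ⟨e, he, ff, hff, hef⟩ := Submodule.mem_sup.mp h1
  have heI : e ∈ I := TwoSidedIdeal.mem_asIdeal.mp he
  have hfix : ∀ x : R, x ∈ I → x * e = x := by
    intro x hx
    have hxf : x * ff ∈ J := by
      have h2 : x * ff = x - x * e := by
        have h3 : x * e + x * ff = x := by rw [← mul_add, hef, mul_one]
        exact eq_sub_of_add_eq' h3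
      rw [h2]
      exact TwoSidedIdeal.mem_asIdeal.mpr
        (sub_mem hx (I.mul_mem_right x e hx))
    have hxf' : x * ff ∈ J' := by
      have : x • ff ∈ J' := Submodule.smul_mem J' x hff
      simpa [smul_eq_mul] using this
    have : x * ff ∈ J ⊓ J' := ⟨hxf, hxf'⟩
    rw [hcompl.inf_eq_bot] at this
    have hz : x * ff = 0 := this
    have h4 : x * e + x * ff = x := by rw [← mul_add, hef, mul_one]
    rw [hz, add_zero] at h4
    exact h4
  have hene : e ≠ 0 := by
    intro h0
    have := hfix _ hψx₀I
    rw [h0, mul_zero] at this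
    exact hψx₀ne this.symm
  have hee : e * e = e := hfix e heI
  have hpow : ∀ m : ℕ, e ^ (m + 1) = e := by
    intro m
    induction m with
    | zero => rw [pow_one]
    | succ k ih => rw [pow_succ, ih, hee]
  have := hnil (List.replicate (a + 1) e) (by simp) (by
    intro x hx
    rw [List.eq_of_mem_replicate hx]
    exact heI)
  have h5 : (List.replicate (a + 1) e).prod = e ^ (a + 1) := List.prod_replicate (a + 1) e
  rw [h5, hpow a] at this
  exact hene this
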